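/- For every μ > 0, the function q(x,t;μ) = ∫₀^∞ (2πs)^(−1/2) e^(−x²/(2s)) · s^(μ−1) e^(−s/t) / (t^μ Γ(μ)) ds, which is the density of the process B(G₁(t)) obtained by subordinating a standard Brownian motion to an independent Gamma process, satisfies the third-order partial differential equation 4 ∂q/∂t = (2μ − 3) ∂²q/∂x² − x ∂³q/∂x³ for all x ∈ ℝ \ {0} and t > 0. -/

import Mathlib

open MeasureTheory

/-- The density of `B(G₁(t))`, a standard Brownian motion subordinated to an
independent Gamma process:
`q(x,t;μ) = ∫₀^∞ (2πs)^(−1/2) e^(−x²/(2s)) · s^(μ−1) e^(−s/t)/(t^μ Γ(μ)) ds`. -/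
noncomputable def qBG (μ x t : ℝ) : ℝ :=
  ∫ s in Set.Ioi (0:ℝ),
    (2 * Real.pi * s) ^ (-(1:ℝ) / 2) * Real.exp (-x ^ 2 / (2 * s)) *
      (s ^ (μ - 1) * Real.exp (-s / t) / (t ^ μ * Real.Gamma μ))

open Real Set Filter Metric

/-- The integrand in a convenient form. -/
noncomputable def qKf (μ x t s : ℝ) : ℝ :=
  s ^ (μ - 3/2 : ℝ) * Real.exp (-(x^2/2/s)) * Real.exp (-(1/t*s)) *
    ((2*Real.pi) ^ (-(1:ℝ)/2) / (t ^ μ * Real.Gamma μ))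

lemma qKf_nonneg (μ x t s : ℝ) (hμ : 0 < μ) (ht : 0 < t) (hs : 0 ≤ s) :
    0 ≤ qKf μ x t s := by
  have h1 := Real.Gamma_pos_of_pos hμ
  have h2 : (0:ℝ) < t ^ μ := Real.rpow_pos_of_pos ht μ
  have h3 : (0:ℝ) < 2 * Real.pi := by positivity
  unfold qKf
  positivity

lemma qBG_eq (μ x t : ℝ) (ht : 0 < t) :
    qBG μ x t = ∫ s in Set.Ioi (0:ℝ), qKf μ x t s := by
  unfold qBG
  refine setIntegral_congr_fun measurableSet_Ioi (fun s hs => ?_)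
  have hs : (0:ℝ) < s := hs
  have e1 : (2*Real.pi*s) ^ (-(1:ℝ)/2) = (2*Real.pi) ^ (-(1:ℝ)/2) * s ^ (-(1:ℝ)/2) :=
    Real.mul_rpow (by positivity) hs.le
  have e2 : s ^ (-(1:ℝ)/2) * s ^ (μ-1) = s ^ (μ - 3/2 : ℝ) := by
    rw [← Real.rpow_add hs]; ring_nf
  have e3 : (-x^2/(2*s)) = (-(x^2/2/s)) := by ring
  have e4 : (-s/t) = (-(1/t*s)) := by ring
  rw [e1, e3, e4]
  simp only [qKf]
  rw [← e2]
  ring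

lemma qbg_int_master (a b c : ℝ) (hb : 0 < b) (hc : 0 < c) :
    IntegrableOn (fun s : ℝ => s ^ a * Real.exp (-(b/s)) * Real.exp (-(c*s))) (Set.Ioi 0) := by
  obtain ⟨n, hn⟩ := exists_nat_gt (-a - 1)
  have hpn : (-1:ℝ) < a + n := by linarith
  have base : IntegrableOn (fun s : ℝ => s ^ (a + n) * Real.exp (-(c*s))) (Set.Ioi 0) := by
    have h := integrableOn_rpow_mul_exp_neg_mul_rpow hpn (p := 1) one_pos hc
    refine h.congr_fun (fun s hs => ?_) measurableSet_Ioi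
    beta_reduce; rw [Real.rpow_one]; ring_nf
  have contf : ContinuousOn (fun s : ℝ => s ^ a * Real.exp (-(b/s)) * Real.exp (-(c*s))) (Set.Ioi 0) := by
    have c1 : ContinuousOn (fun s : ℝ => s ^ a) (Set.Ioi 0) := fun s hs =>
      (Real.continuousAt_rpow_const s a (Or.inl (ne_of_gt hs))).continuousWithinAt
    have c2 : ContinuousOn (fun s : ℝ => Real.exp (-(b/s))) (Set.Ioi 0) :=
      Real.continuous_exp.comp_continuousOn
        ((continuousOn_const.div continuousOn_id (fun s hs => ne_of_gt hs)).neg)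
    have c3 : Continuous fun s : ℝ => Real.exp (-(c*s)) := by continuity
    exact (c1.mul c2).mul c3.continuousOn
  refine Integrable.mono (base.const_mul ((n.factorial : ℝ) / b ^ n))
    (contf.aestronglyMeasurable measurableSet_Ioi) ?_
  rw [ae_restrict_iff' measurableSet_Ioi]
  filter_upwards with s hs
  have hs : (0:ℝ) < s := hs
  have key : Real.exp (-(b/s)) ≤ (n.factorial : ℝ) * s^n / b^n := by
    have h1 : (b/s)^n / (n.factorial : ℝ) ≤ Real.exp (b/s) := by
      exact_mod_cast Real.pow_div_factorial_le_exp (b/s) (by positivity) n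
    have h2 : (0:ℝ) < (b/s)^n / (n.factorial : ℝ) := by positivity
    rw [Real.exp_neg]
    calc (Real.exp (b/s))⁻¹ ≤ ((b/s)^n / (n.factorial : ℝ))⁻¹ := by
          exact inv_anti₀ h2 h1
      _ = (n.factorial : ℝ) * s^n / b^n := by
          field_simp [div_pow]; rw [← mul_pow, div_mul_cancel₀ b hs.ne']
  rw [Real.norm_eq_abs, Real.norm_eq_abs, abs_of_nonneg (by positivity),
    abs_of_nonneg (by positivity)]
  calc s ^ a * Real.exp (-(b/s)) * Real.exp (-(c*s))
      ≤ s ^ a * ((n.factorial : ℝ) * s^n / b^n) * Real.exp (-(c*s)) := by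
        gcongr
    _ = (n.factorial : ℝ) / b ^ n * (s ^ (a + n) * Real.exp (-(c*s))) := by
        rw [Real.rpow_add hs, Real.rpow_natCast]; ring

lemma hasDerivAt_qKf_x (μ t s : ℝ) (hs : 0 < s) (x : ℝ) :
    HasDerivAt (fun y => qKf μ y t s) (-(x/s) * qKf μ x t s) x := by
  have h0 : HasDerivAt (fun y : ℝ => -(y^2/2/s)) (-(x/s)) x := by
    have h := (((hasDerivAt_pow 2 x).div_const 2).div_const s).neg
    convert h using 1 <;> try rfl
    ring
  have h := ((h0.exp.const_mul ((s:ℝ) ^ (μ - 3/2 : ℝ))).mul_const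
    (Real.exp (-(1/t*s)))).mul_const ((2*Real.pi) ^ (-(1:ℝ)/2) / (t ^ μ * Real.Gamma μ))
  simp only [qKf]
  convert h using 1 <;> try rfl
  ring

lemma hasDerivAt_qKf_s (μ x t : ℝ) (ht : 0 < t) {s : ℝ} (hs : 0 < s) :
    HasDerivAt (fun σ => qKf μ x t σ)
      ((x^2/(2*s^2) + (μ - 3/2)/s - 1/t) * qKf μ x t s) s := by
  have hA : HasDerivAt (fun σ : ℝ => σ ^ (μ - 3/2 : ℝ))
      ((μ - 3/2) * s ^ (μ - 3/2 - 1 : ℝ)) s :=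
    Real.hasDerivAt_rpow_const (Or.inl hs.ne')
  have hBin : HasDerivAt (fun σ : ℝ => -(x^2/2/σ)) (x^2/2/s^2) s := by
    have h := (((hasDerivAt_inv hs.ne').const_mul (x^2/2))).neg
    have e : (fun σ : ℝ => -(x^2/2/σ)) = (fun σ : ℝ => -(x^2/2 * σ⁻¹)) :=
      funext fun σ => by rw [div_eq_mul_inv]
    rw [e]
    convert h using 1 <;> try rfl
    field_simp
  have hB := hBin.exp
  have hCin : HasDerivAt (fun σ : ℝ => -(1/t*σ)) (-(1/t)) s := by
    have h := ((hasDerivAt_id s).const_mul (1/t)).neg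
    convert h using 1 <;> try rfl
    ring
  have hC := hCin.exp
  have h := ((hA.mul hB).mul hC).mul_const ((2*Real.pi) ^ (-(1:ℝ)/2) / (t ^ μ * Real.Gamma μ))
  simp only [qKf]
  convert h using 1 <;> try rfl
  simp only [Pi.mul_apply]
  rw [Real.rpow_sub_one hs.ne']
  field_simp
  ring

lemma hasDerivAt_qKf_t (μ x s : ℝ) (hμ : 0 < μ) {t : ℝ} (ht : 0 < t) :
    HasDerivAt (fun τ => qKf μ x τ s) ((s/t^2 - μ/t) * qKf μ x t s) t := by
  have hΓ : 0 < Real.Gamma μ := Real.Gamma_pos_of_pos hμ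
  have htμ : (0:ℝ) < t ^ μ := Real.rpow_pos_of_pos ht μ
  have g1in : HasDerivAt (fun τ : ℝ => -(1/τ*s)) (s/t^2) t := by
    have h := (((hasDerivAt_inv ht.ne').mul_const s)).neg
    have e : (fun τ : ℝ => -(1/τ*s)) = (fun τ : ℝ => -(τ⁻¹ * s)) :=
      funext fun τ => by rw [one_div]
    rw [e]
    convert h using 1 <;> try rfl
    field_simp
  have g1 := g1in.exp
  have hD : HasDerivAt (fun τ : ℝ => τ ^ μ * Real.Gamma μ)
      (μ * t ^ (μ - 1 : ℝ) * Real.Gamma μ) t :=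
    (Real.hasDerivAt_rpow_const (Or.inl ht.ne')).mul_const _
  have g2 : HasDerivAt (fun τ : ℝ => (2*Real.pi) ^ (-(1:ℝ)/2) / (τ ^ μ * Real.Gamma μ))
      ((0 * (t ^ μ * Real.Gamma μ) - (2*Real.pi) ^ (-(1:ℝ)/2) * (μ * t ^ (μ - 1 : ℝ) * Real.Gamma μ)) / (t ^ μ * Real.Gamma μ)^2) t :=
    (hasDerivAt_const t _).div hD (by positivity)
  have h12 := g1.const_mul ((s:ℝ) ^ (μ - 3/2 : ℝ) * Real.exp (-(x^2/2/s)))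
  have h := h12.mul g2
  simp only [qKf]
  convert h using 1 <;> try rfl
  rw [Real.rpow_sub_one ht.ne']
  field_simp
  ring

lemma qKf_contOn (μ x t : ℝ) : ContinuousOn (fun s => qKf μ x t s) (Set.Ioi 0) := by
  have c1 : ContinuousOn (fun s : ℝ => s ^ (μ - 3/2 : ℝ)) (Set.Ioi 0) := fun s hs =>
    (Real.continuousAt_rpow_const s _ (Or.inl (ne_of_gt hs))).continuousWithinAt
  have c2 : ContinuousOn (fun s : ℝ => Real.exp (-(x^2/2/s))) (Set.Ioi 0) :=
    Real.continuous_exp.comp_continuousOn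
      ((continuousOn_const.div continuousOn_id (fun s hs => ne_of_gt hs)).neg)
  have c3 : Continuous fun s : ℝ => Real.exp (-(1/t*s)) := by continuity
  exact ((c1.mul c2).mul c3.continuousOn).mul continuousOn_const

lemma qKf_meas (μ x t : ℝ) (P : ℝ → ℝ) (hP : ContinuousOn P (Set.Ioi 0)) :
    AEStronglyMeasurable (fun s => P s * qKf μ x t s) (volume.restrict (Set.Ioi 0)) :=
  (hP.mul (qKf_contOn μ x t)).aestronglyMeasurable measurableSet_Ioi

lemma qKf_le (μ t : ℝ) (hμ : 0 < μ) (ht : 0 < t) {x ξ s : ℝ} (hs : 0 < s)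
    (hξ : x^2/4 ≤ ξ^2) :
    qKf μ ξ t s ≤ s ^ (μ - 3/2 : ℝ) * Real.exp (-(x^2/8/s)) * Real.exp (-(1/t*s)) *
      ((2*Real.pi) ^ (-(1:ℝ)/2) / (t ^ μ * Real.Gamma μ)) := by
  have hΓ : 0 < Real.Gamma μ := Real.Gamma_pos_of_pos hμ
  have htμ : (0:ℝ) < t ^ μ := Real.rpow_pos_of_pos ht μ
  unfold qKf
  have hexp : Real.exp (-(ξ^2/2/s)) ≤ Real.exp (-(x^2/8/s)) := by
    apply Real.exp_le_exp.2
    have h' : x^2/8/s ≤ ξ^2/2/s := (div_le_div_iff_of_pos_right hs).2 (by linarith)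
    linarith
  have h0 : (0:ℝ) ≤ s ^ (μ-3/2:ℝ) := Real.rpow_nonneg hs.le _
  have hmain : s ^ (μ-3/2:ℝ) * Real.exp (-(ξ^2/2/s)) * Real.exp (-(1/t*s)) ≤
      s ^ (μ-3/2:ℝ) * Real.exp (-(x^2/8/s)) * Real.exp (-(1/t*s)) :=
    mul_le_mul_of_nonneg_right (mul_le_mul_of_nonneg_left hexp h0) (Real.exp_nonneg _)
  exact mul_le_mul_of_nonneg_right hmain (by positivity)

lemma qKf_integrable (μ x t : ℝ) (hμ : 0 < μ) (hx : x ≠ 0) (ht : 0 < t) :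
    Integrable (fun s => qKf μ x t s) (volume.restrict (Set.Ioi 0)) := by
  have h := (qbg_int_master (μ - 3/2) (x^2/2) (1/t)
    (by positivity) (by positivity)).mul_const
    ((2*Real.pi) ^ (-(1:ℝ)/2) / (t ^ μ * Real.Gamma μ))
  simpa only [qKf] using h

-- facts about points in the ball around x of radius |x|/2
lemma qbg_ball (x ξ : ℝ) (hξ : ξ ∈ Metric.ball x (|x|/2)) :
    x^2/4 ≤ ξ^2 ∧ |ξ| ≤ 3/2*|x| := by
  have h : |ξ - x| < |x|/2 := by rwa [Metric.mem_ball, Real.dist_eq] at hξ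
  have h1 : |x| - |ξ| ≤ |ξ - x| := by
    have := abs_sub_abs_le_abs_sub x ξ
    rwa [abs_sub_comm] at this
  have h2 : |ξ| - |x| ≤ |ξ - x| := abs_sub_abs_le_abs_sub ξ x
  constructor
  · have h3 : |x|/2 ≤ |ξ| := by linarith
    have h4 : (|x|/2)^2 ≤ |ξ|^2 := by
      apply sq_le_sq' <;> [linarith [abs_nonneg ξ]; exact h3]
    calc x^2/4 = (|x|/2)^2 := by rw [div_pow, sq_abs]; ring
      _ ≤ |ξ|^2 := h4
      _ = ξ^2 := sq_abs ξ
  · linarith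

lemma qbg_step (μ t x : ℝ) (hμ : 0 < μ) (ht : 0 < t) (hx : x ≠ 0)
    (P Q : ℝ → ℝ → ℝ) (C : ℝ)
    (hPc : ∀ ξ, ContinuousOn (fun s => P ξ s) (Set.Ioi 0))
    (hQc : ContinuousOn (fun s => Q x s) (Set.Ioi 0))
    (hint : Integrable (fun s => P x s * qKf μ x t s) (volume.restrict (Set.Ioi 0)))
    (hDiff : ∀ s, 0 < s → ∀ ξ,
      HasDerivAt (fun y => P y s * qKf μ y t s) (Q ξ s * qKf μ ξ t s) ξ)
    (hQb : ∀ s, 0 < s → ∀ ξ ∈ Metric.ball x (|x|/2),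
      |Q ξ s| ≤ C * (1/s + 1/s^2 + 1/s^3)) :
    Integrable (fun s => Q x s * qKf μ x t s) (volume.restrict (Set.Ioi 0)) ∧
    HasDerivAt (fun ξ => ∫ s in Set.Ioi (0:ℝ), P ξ s * qKf μ ξ t s)
      (∫ s in Set.Ioi (0:ℝ), Q x s * qKf μ x t s) x := by
  have hΓ : 0 < Real.Gamma μ := Real.Gamma_pos_of_pos hμ
  have htμ : (0:ℝ) < t ^ μ := Real.rpow_pos_of_pos ht μ
  set c₀ : ℝ := (2*Real.pi) ^ (-(1:ℝ)/2) / (t ^ μ * Real.Gamma μ) with hc₀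
  have hc₀pos : 0 < c₀ := by positivity
  set bound : ℝ → ℝ := fun s =>
    C * ((s ^ (μ - 5/2 : ℝ) + s ^ (μ - 7/2 : ℝ) + s ^ (μ - 9/2 : ℝ)) *
      Real.exp (-(x^2/8/s)) * Real.exp (-(1/t*s))) * c₀ with hbd
  have hbound_int : Integrable bound (volume.restrict (Set.Ioi 0)) := by
    have h1 := qbg_int_master (μ - 5/2) (x^2/8) (1/t) (by positivity) (by positivity)
    have h2 := qbg_int_master (μ - 7/2) (x^2/8) (1/t) (by positivity) (by positivity)
    have h3 := qbg_int_master (μ - 9/2) (x^2/8) (1/t) (by positivity) (by positivity)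
    have h := (((h1.add h2).add h3).const_mul C).mul_const c₀
    refine h.congr (ae_of_all _ fun s => ?_)
    simp only [hbd, Pi.add_apply]
    ring
  have key := hasDerivAt_integral_of_dominated_loc_of_deriv_le
    (F := fun ξ s => P ξ s * qKf μ ξ t s)
    (F' := fun ξ s => Q ξ s * qKf μ ξ t s)
    (x₀ := x) (bound := bound)
    (s := ball x (|x|/2)) (ball_mem_nhds x (by positivity))
    (Filter.Eventually.of_forall fun ξ => qKf_meas μ ξ t _ (hPc ξ))
    hint
    (qKf_meas μ x t _ hQc)
    ?_ hbound_int ?_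
  · exact key
  · -- the bound
    rw [ae_restrict_iff' measurableSet_Ioi]
    filter_upwards with s hs
    intro ξ hξ
    have hs : (0:ℝ) < s := hs
    obtain ⟨hξ1, _⟩ := qbg_ball x ξ hξ
    have hKle := qKf_le μ t hμ ht hs hξ1
    have hKnn : 0 ≤ qKf μ ξ t s := qKf_nonneg μ ξ t s hμ ht hs.le
    have hQ := hQb s hs ξ hξ
    rw [Real.norm_eq_abs, abs_mul, abs_of_nonneg hKnn]
    calc |Q ξ s| * qKf μ ξ t s
        ≤ (C * (1/s + 1/s^2 + 1/s^3)) *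
          (s ^ (μ - 3/2 : ℝ) * Real.exp (-(x^2/8/s)) * Real.exp (-(1/t*s)) * c₀) :=
          mul_le_mul hQ hKle hKnn ((abs_nonneg _).trans hQ)
      _ = bound s := by
          simp only [hbd]
          have e1 : s ^ (μ - 5/2 : ℝ) = s ^ (μ - 3/2 : ℝ) / s := by
            rw [show (μ - 5/2 : ℝ) = (μ - 3/2) - 1 by ring, Real.rpow_sub_one hs.ne']
          have e2 : s ^ (μ - 7/2 : ℝ) = s ^ (μ - 3/2 : ℝ) / s / s := by
            rw [show (μ - 7/2 : ℝ) = (μ - 3/2) - 1 - 1 by ring,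
              Real.rpow_sub_one (by positivity), Real.rpow_sub_one hs.ne']
          have e3 : s ^ (μ - 9/2 : ℝ) = s ^ (μ - 3/2 : ℝ) / s / s / s := by
            rw [show (μ - 9/2 : ℝ) = (μ - 3/2) - 1 - 1 - 1 by ring,
              Real.rpow_sub_one (by positivity), Real.rpow_sub_one (by positivity),
              Real.rpow_sub_one hs.ne']
          rw [e1, e2, e3]
          field_simp
  · -- differentiability
    rw [ae_restrict_iff' measurableSet_Ioi]
    filter_upwards with s hs
    intro ξ _
    exact hDiff s hs ξ

lemma contOn_inv_s : ContinuousOn (fun s : ℝ => 1/s) (Set.Ioi 0) :=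
  continuousOn_const.div continuousOn_id fun s hs => ne_of_gt hs

lemma contOn_c_div_pow (c : ℝ) (n : ℕ) :
    ContinuousOn (fun s : ℝ => c/s^n) (Set.Ioi 0) :=
  continuousOn_const.div ((continuous_pow n).continuousOn)
    fun s hs => pow_ne_zero n (ne_of_gt hs)

lemma qbg_bhelp {s : ℝ} (hs : 0 < s) {a1 a2 a3 C : ℝ}
    (h1 : 0 ≤ a1) (h2 : 0 ≤ a2) (h3 : 0 ≤ a3)
    (hC1 : a1 ≤ C) (hC2 : a2 ≤ C) (hC3 : a3 ≤ C) :
    a1/s + a2/s^2 + a3/s^3 ≤ C * (1/s + 1/s^2 + 1/s^3) := by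
  rw [mul_add, mul_add, mul_one_div, mul_one_div, mul_one_div]
  gcongr

lemma qbg_d1 (μ t x : ℝ) (hμ : 0 < μ) (ht : 0 < t) (hx : x ≠ 0) :
    Integrable (fun s => -(x/s) * qKf μ x t s) (volume.restrict (Set.Ioi 0)) ∧
    HasDerivAt (fun ξ => ∫ s in Set.Ioi (0:ℝ), qKf μ ξ t s)
      (∫ s in Set.Ioi (0:ℝ), -(x/s) * qKf μ x t s) x := by
  have h := qbg_step μ t x hμ ht hx (fun _ _ => 1) (fun ξ s => -(ξ/s)) (2*|x|)
    (fun ξ => continuousOn_const)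
    ((continuousOn_const.div continuousOn_id fun s hs => ne_of_gt hs).neg)
    (by simpa only [one_mul] using qKf_integrable μ x t hμ hx ht)
    (fun s hs ξ => by simpa only [one_mul] using hasDerivAt_qKf_x μ t s hs ξ)
    ?_
  · exact ⟨h.1, by simpa only [one_mul] using h.2⟩
  · intro s hs ξ hξ
    obtain ⟨_, hξ2⟩ := qbg_ball x ξ hξ
    have hxnn := abs_nonneg x
    calc |(-(ξ/s))| = |ξ|/s := by rw [abs_neg, abs_div, abs_of_pos hs]
      _ ≤ (3/2*|x|)/s + 0/s^2 + 0/s^3 := by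
          rw [zero_div, zero_div, add_zero, add_zero]; gcongr
      _ ≤ 2*|x| * (1/s + 1/s^2 + 1/s^3) :=
          qbg_bhelp hs (by positivity) le_rfl le_rfl (by linarith) (by positivity) (by positivity)

lemma qbg_d2 (μ t x : ℝ) (hμ : 0 < μ) (ht : 0 < t) (hx : x ≠ 0) :
    Integrable (fun s => (x^2/s^2 - 1/s) * qKf μ x t s) (volume.restrict (Set.Ioi 0)) ∧
    HasDerivAt (fun ξ => ∫ s in Set.Ioi (0:ℝ), -(ξ/s) * qKf μ ξ t s)
      (∫ s in Set.Ioi (0:ℝ), (x^2/s^2 - 1/s) * qKf μ x t s) x := by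
  refine qbg_step μ t x hμ ht hx (fun ξ s => -(ξ/s)) (fun ξ s => ξ^2/s^2 - 1/s)
    (9/4*x^2 + 1)
    (fun ξ => (continuousOn_const.div continuousOn_id fun s hs => ne_of_gt hs).neg)
    ((contOn_c_div_pow (x^2) 2).sub contOn_inv_s)
    (qbg_d1 μ t x hμ ht hx).1
    (fun s hs ξ => ?_) (fun s hs ξ hξ => ?_)
  · have h1 : HasDerivAt (fun y : ℝ => -(y/s)) (-(1/s)) ξ := by
      exact ((hasDerivAt_id ξ).div_const s).neg.congr_deriv (by simp)
    have h := h1.mul (hasDerivAt_qKf_x μ t s hs ξ)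
    convert h using 1 <;> try rfl
    ring
  · obtain ⟨_, hξ2⟩ := qbg_ball x ξ hξ
    have hxnn := abs_nonneg x
    have hξsq : ξ^2 ≤ 9/4*x^2 := by
      have h := mul_le_mul hξ2 hξ2 (abs_nonneg ξ) (by positivity)
      calc ξ^2 = |ξ| * |ξ| := by rw [← abs_mul, ← sq, abs_of_nonneg (sq_nonneg ξ)]
        _ ≤ (3/2*|x|) * (3/2*|x|) := h
        _ = 9/4*x^2 := by rw [show (3/2*|x|) * (3/2*|x|) = 9/4*(|x| * |x|) by ring,
            ← abs_mul, ← sq, abs_of_nonneg (sq_nonneg x)]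
    calc |ξ^2/s^2 - 1/s| ≤ |ξ^2/s^2| + |1/s| := abs_sub _ _
      _ = ξ^2/s^2 + 1/s := by
          rw [abs_of_nonneg (by positivity), abs_of_nonneg (by positivity)]
      _ ≤ 1/s + (9/4*x^2)/s^2 + 0/s^3 := by
          rw [zero_div, add_zero]
          have : ξ^2/s^2 ≤ (9/4*x^2)/s^2 := by gcongr
          linarith
      _ ≤ (9/4*x^2 + 1) * (1/s + 1/s^2 + 1/s^3) :=
          qbg_bhelp hs (by positivity) (by positivity) le_rfl (by nlinarith)
            (by nlinarith) (by positivity)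

lemma qbg_d3 (μ t x : ℝ) (hμ : 0 < μ) (ht : 0 < t) (hx : x ≠ 0) :
    Integrable (fun s => (3*x/s^2 - x^3/s^3) * qKf μ x t s) (volume.restrict (Set.Ioi 0)) ∧
    HasDerivAt (fun ξ => ∫ s in Set.Ioi (0:ℝ), (ξ^2/s^2 - 1/s) * qKf μ ξ t s)
      (∫ s in Set.Ioi (0:ℝ), (3*x/s^2 - x^3/s^3) * qKf μ x t s) x := by
  refine qbg_step μ t x hμ ht hx (fun ξ s => ξ^2/s^2 - 1/s) (fun ξ s => 3*ξ/s^2 - ξ^3/s^3)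
    (5*|x| + 4*|x|^3)
    (fun ξ => (contOn_c_div_pow (ξ^2) 2).sub contOn_inv_s)
    ((contOn_c_div_pow (3*x) 2).sub (contOn_c_div_pow (x^3) 3))
    (qbg_d2 μ t x hμ ht hx).1
    (fun s hs ξ => ?_) (fun s hs ξ hξ => ?_)
  · have h1 : HasDerivAt (fun y : ℝ => y^2/s^2 - 1/s) (2*ξ/s^2) ξ := by
      have h := ((hasDerivAt_pow 2 ξ).div_const (s^2)).sub_const (1/s)
      convert h using 1 <;> try rfl
      norm_num
    have h := h1.mul (hasDerivAt_qKf_x μ t s hs ξ)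
    convert h using 1 <;> try rfl
    ring
  · obtain ⟨_, hξ2⟩ := qbg_ball x ξ hξ
    have hxnn := abs_nonneg x
    have hξnn := abs_nonneg ξ
    have hcube : |ξ|^3 ≤ 27/8*|x|^3 := by
      calc |ξ|^3 ≤ (3/2*|x|)^3 := by gcongr
        _ = 27/8*|x|^3 := by ring
    calc |3*ξ/s^2 - ξ^3/s^3| ≤ |3*ξ/s^2| + |ξ^3/s^3| := abs_sub _ _
      _ = 3*|ξ|/s^2 + |ξ|^3/s^3 := by
          rw [abs_div, abs_div, abs_of_pos (by positivity : (0:ℝ) < s^2),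
            abs_of_pos (by positivity : (0:ℝ) < s^3), abs_mul, abs_pow]
          norm_num
      _ ≤ 0/s + (9/2*|x|)/s^2 + (27/8*|x|^3)/s^3 := by
          rw [zero_div, zero_add]
          have e1 : 3*|ξ|/s^2 ≤ (9/2*|x|)/s^2 :=
            (div_le_div_iff_of_pos_right (by positivity : (0:ℝ) < s^2)).2 (by linarith)
          have e2 : |ξ|^3/s^3 ≤ (27/8*|x|^3)/s^3 :=
            (div_le_div_iff_of_pos_right (by positivity : (0:ℝ) < s^3)).2 hcube
          linarith
      _ ≤ (5*|x| + 4*|x|^3) * (1/s + 1/s^2 + 1/s^3) := by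
          have hx3 : (0:ℝ) ≤ |x|^3 := by positivity
          exact qbg_bhelp hs le_rfl (by positivity) (by positivity) (by positivity)
            (by linarith) (by linarith)

lemma qbg_dt (μ x t : ℝ) (hμ : 0 < μ) (hx : x ≠ 0) (ht : 0 < t) :
    Integrable (fun s => (s/t^2 - μ/t) * qKf μ x t s) (volume.restrict (Set.Ioi 0)) ∧
    HasDerivAt (fun τ => ∫ s in Set.Ioi (0:ℝ), qKf μ x τ s)
      (∫ s in Set.Ioi (0:ℝ), (s/t^2 - μ/t) * qKf μ x t s) t := by
  have hΓ : 0 < Real.Gamma μ := Real.Gamma_pos_of_pos hμ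
  have ht2 : (0:ℝ) < t/2 := by positivity
  have ht2μ : (0:ℝ) < (t/2) ^ μ := Real.rpow_pos_of_pos ht2 μ
  set c₁ : ℝ := (2*Real.pi) ^ (-(1:ℝ)/2) / ((t/2) ^ μ * Real.Gamma μ) with hc₁
  have hc₁pos : 0 < c₁ := by positivity
  set bound : ℝ → ℝ := fun s =>
    ((4/t^2)*s + 2*μ/t) * (s ^ (μ - 3/2 : ℝ) * Real.exp (-(x^2/2/s)) *
      Real.exp (-(2/(3*t)*s))) * c₁ with hbd
  have hbound_int : Integrable bound (volume.restrict (Set.Ioi 0)) := by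
    have m1 := qbg_int_master (μ - 1/2) (x^2/2) (2/(3*t)) (by positivity) (by positivity)
    have m2 := qbg_int_master (μ - 3/2) (x^2/2) (2/(3*t)) (by positivity) (by positivity)
    have h := ((m1.const_mul (4/t^2)).add (m2.const_mul (2*μ/t))).mul_const c₁
    refine IntegrableOn.congr_fun h (fun s hs => ?_) measurableSet_Ioi
    have hs : (0:ℝ) < s := hs
    have e : s ^ (μ - 1/2 : ℝ) = s ^ (μ - 3/2 : ℝ) * s := by
      rw [show (μ - 1/2 : ℝ) = (μ - 3/2) + 1 by ring, Real.rpow_add_one hs.ne']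
    simp only [Pi.add_apply, hbd]
    rw [e]; ring
  have key := hasDerivAt_integral_of_dominated_loc_of_deriv_le
    (F := fun τ s => qKf μ x τ s)
    (F' := fun τ s => (s/τ^2 - μ/τ) * qKf μ x τ s)
    (x₀ := t) (bound := bound)
    (s := ball t (t/2)) (ball_mem_nhds t ht2)
    (Filter.Eventually.of_forall fun τ =>
      (qKf_contOn μ x τ).aestronglyMeasurable measurableSet_Ioi)
    (qKf_integrable μ x t hμ hx ht)
    (qKf_meas μ x t _ (((continuous_id.div_const (t^2)).sub continuous_const).continuousOn))
    ?_ hbound_int ?_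
  · exact key
  · rw [ae_restrict_iff' measurableSet_Ioi]
    filter_upwards with s hs
    intro τ hτ
    have hs : (0:ℝ) < s := hs
    have hdist : |τ - t| < t/2 := by rwa [Metric.mem_ball, Real.dist_eq] at hτ
    have hτ1 : t/2 < τ := by cases abs_lt.1 hdist; linarith
    have hτ2 : τ < 3*t/2 := by cases abs_lt.1 hdist; linarith
    have hτ0 : 0 < τ := lt_trans ht2 hτ1
    have hτμ : (0:ℝ) < τ ^ μ := Real.rpow_pos_of_pos hτ0 μ
    have hKnn : 0 ≤ qKf μ x τ s := qKf_nonneg μ x τ s hμ hτ0 hs.le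
    have hcoef : |s/τ^2 - μ/τ| ≤ (4/t^2)*s + 2*μ/t := by
      have hτsq : t^2/4 ≤ τ^2 := by nlinarith
      have b1 : s/τ^2 ≤ (4/t^2)*s := by
        have h' : s*(t^2/4) ≤ s*τ^2 := mul_le_mul_of_nonneg_left hτsq hs.le
        rw [show (4/t^2)*s = 4*s/t^2 by ring, div_le_div_iff₀ (by positivity) (by positivity)]
        nlinarith
      have b2 : μ/τ ≤ 2*μ/t := by
        have h' : μ*(t/2) ≤ μ*τ := mul_le_mul_of_nonneg_left hτ1.le hμ.le
        rw [div_le_div_iff₀ hτ0 ht]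
        nlinarith
      have b3 : (0:ℝ) ≤ s/τ^2 := by positivity
      have b4 : (0:ℝ) ≤ μ/τ := by positivity
      rw [abs_le]; constructor <;> nlinarith
    have hKle : qKf μ x τ s ≤ s ^ (μ - 3/2 : ℝ) * Real.exp (-(x^2/2/s)) *
        Real.exp (-(2/(3*t)*s)) * c₁ := by
      have hC : Real.exp (-(1/τ*s)) ≤ Real.exp (-(2/(3*t)*s)) := by
        apply Real.exp_le_exp.2
        have h2 : 2/(3*t) ≤ 1/τ := by
          rw [div_le_div_iff₀ (by positivity) hτ0]
          linarith
        have h3 := mul_le_mul_of_nonneg_right h2 hs.le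
        linarith
      have hD : (2*Real.pi) ^ (-(1:ℝ)/2) / (τ ^ μ * Real.Gamma μ) ≤ c₁ := by
        rw [hc₁]
        apply div_le_div_of_nonneg_left (by positivity) (by positivity)
        have : (t/2) ^ μ ≤ τ ^ μ := Real.rpow_le_rpow ht2.le hτ1.le hμ.le
        exact mul_le_mul_of_nonneg_right this hΓ.le
      have hAB : (0:ℝ) ≤ s ^ (μ - 3/2 : ℝ) * Real.exp (-(x^2/2/s)) := by positivity
      unfold qKf
      calc s ^ (μ - 3/2 : ℝ) * Real.exp (-(x^2/2/s)) * Real.exp (-(1/τ*s)) *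
            ((2*Real.pi) ^ (-(1:ℝ)/2) / (τ ^ μ * Real.Gamma μ))
          ≤ s ^ (μ - 3/2 : ℝ) * Real.exp (-(x^2/2/s)) * Real.exp (-(2/(3*t)*s)) *
            ((2*Real.pi) ^ (-(1:ℝ)/2) / (τ ^ μ * Real.Gamma μ)) := by
            apply mul_le_mul_of_nonneg_right (mul_le_mul_of_nonneg_left hC hAB)
            positivity
        _ ≤ s ^ (μ - 3/2 : ℝ) * Real.exp (-(x^2/2/s)) * Real.exp (-(2/(3*t)*s)) * c₁ := by
            apply mul_le_mul_of_nonneg_left hD (by positivity)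
    rw [Real.norm_eq_abs, abs_mul, abs_of_nonneg hKnn]
    calc |s/τ^2 - μ/τ| * qKf μ x τ s
        ≤ ((4/t^2)*s + 2*μ/t) * (s ^ (μ - 3/2 : ℝ) * Real.exp (-(x^2/2/s)) *
            Real.exp (-(2/(3*t)*s)) * c₁) :=
          mul_le_mul hcoef hKle hKnn ((abs_nonneg _).trans hcoef)
      _ = bound s := by simp only [hbd]; ring
  · rw [ae_restrict_iff' measurableSet_Ioi]
    filter_upwards with s hs
    intro τ hτ
    have hdist : |τ - t| < t/2 := by rwa [Metric.mem_ball, Real.dist_eq] at hτ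
    have hτ1 : t/2 < τ := by cases abs_lt.1 hdist; linarith
    exact hasDerivAt_qKf_t μ x s hμ (lt_trans ht2 hτ1)

lemma qbg_tend0 (p b c : ℝ) (hb : 0 < b) (hc : 0 < c) :
    Tendsto (fun s : ℝ => s ^ p * Real.exp (-(b/s)) * Real.exp (-(c*s)))
      (nhdsWithin 0 (Set.Ioi 0)) (nhds 0) := by
  have h1 : Tendsto (fun s : ℝ => s ^ p * Real.exp (-(b/s)))
      (nhdsWithin 0 (Set.Ioi 0)) (nhds 0) := by
    have hcomp := (tendsto_rpow_mul_exp_neg_mul_atTop_nhds_zero (-p) b hb).comp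
      tendsto_inv_nhdsGT_zero
    refine hcomp.congr' ?_
    filter_upwards [self_mem_nhdsWithin] with s hs
    have hs : (0:ℝ) < s := hs
    simp only [Function.comp_apply]
    rw [Real.inv_rpow hs.le, ← Real.rpow_neg hs.le, neg_neg]
    congr 1
    rw [neg_mul, div_eq_mul_inv]
  apply squeeze_zero_norm' ?_ h1
  filter_upwards [self_mem_nhdsWithin] with s hs
  have hs : (0:ℝ) < s := hs
  have he : Real.exp (-(c*s)) ≤ 1 := Real.exp_le_one_iff.2 (by nlinarith)
  rw [Real.norm_eq_abs, abs_of_nonneg (by positivity)]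
  calc s ^ p * Real.exp (-(b/s)) * Real.exp (-(c*s))
      ≤ s ^ p * Real.exp (-(b/s)) * 1 := by
        apply mul_le_mul_of_nonneg_left he (by positivity)
    _ = s ^ p * Real.exp (-(b/s)) := by ring

lemma qbg_tendTop (p b c : ℝ) (hb : 0 ≤ b) (hc : 0 < c) :
    Tendsto (fun s : ℝ => s ^ p * Real.exp (-(b/s)) * Real.exp (-(c*s)))
      atTop (nhds 0) := by
  have h1 : Tendsto (fun s : ℝ => s ^ p * Real.exp (-(c*s))) atTop (nhds 0) := by
    have := tendsto_rpow_mul_exp_neg_mul_atTop_nhds_zero p c hc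
    refine this.congr fun s => ?_
    rw [neg_mul]
  apply squeeze_zero_norm' ?_ h1
  filter_upwards [eventually_gt_atTop 0] with s hs
  have he : Real.exp (-(b/s)) ≤ 1 := Real.exp_le_one_iff.2 (by
    have : (0:ℝ) ≤ b/s := by positivity
    linarith)
  rw [Real.norm_eq_abs, abs_of_nonneg (by positivity)]
  calc s ^ p * Real.exp (-(b/s)) * Real.exp (-(c*s))
      = s ^ p * Real.exp (-(c*s)) * Real.exp (-(b/s)) := by ring
    _ ≤ s ^ p * Real.exp (-(c*s)) * 1 := by
        apply mul_le_mul_of_nonneg_left he (by positivity)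
    _ = s ^ p * Real.exp (-(c*s)) := by ring

lemma qbg_key (μ x t : ℝ) (hμ : 0 < μ) (hx : x ≠ 0) (ht : 0 < t) :
    ∫ s in Set.Ioi (0:ℝ),
      (4*(s/t^2 - μ/t) - (2*μ-3)*(x^2/s^2 - 1/s) + x*(3*x/s^2 - x^3/s^3)) * qKf μ x t s = 0 := by
  have hΓ : 0 < Real.Gamma μ := Real.Gamma_pos_of_pos hμ
  have htμ : (0:ℝ) < t ^ μ := Real.rpow_pos_of_pos ht μ
  set c₀ : ℝ := (2*Real.pi) ^ (-(1:ℝ)/2) / (t ^ μ * Real.Gamma μ) with hc₀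
  set G : ℝ → ℝ := fun s => if s ≤ 0 then 0 else (2 - 2*x^2*s⁻¹ - 4/t*s) * qKf μ x t s
    with hG
  have hG0 : G 0 = 0 := if_pos le_rfl
  have hderiv : ∀ s ∈ Set.Ioi (0:ℝ), HasDerivAt G
      ((4*(s/t^2 - μ/t) - (2*μ-3)*(x^2/s^2 - 1/s) + x*(3*x/s^2 - x^3/s^3)) * qKf μ x t s) s := by
    intro s hs
    have hs : (0:ℝ) < s := hs
    have hev : G =ᶠ[nhds s] (fun σ => (2 - 2*x^2*σ⁻¹ - 4/t*σ) * qKf μ x t σ) := by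
      filter_upwards [eventually_gt_nhds hs] with σ hσ
      rw [hG]
      simp only [if_neg (not_le.2 hσ)]
    have hh : HasDerivAt (fun σ : ℝ => 2 - 2*x^2*σ⁻¹ - 4/t*σ)
        (0 - 2*x^2*(-(s^2)⁻¹) - 4/t*1) s :=
      (((hasDerivAt_const s (2:ℝ)).sub ((hasDerivAt_inv hs.ne').const_mul (2*x^2))).sub
        ((hasDerivAt_id s).const_mul (4/t)))
    have htot := hh.mul (hasDerivAt_qKf_s μ x t ht hs)
    apply HasDerivAt.congr_of_eventuallyEq ?_ hev
    convert htot using 1 <;> try rfl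
    field_simp
    ring
  have Dint : IntegrableOn (fun s =>
      (4*(s/t^2 - μ/t) - (2*μ-3)*(x^2/s^2 - 1/s) + x*(3*x/s^2 - x^3/s^3)) * qKf μ x t s)
      (Set.Ioi (0:ℝ)) := by
    have i1 := (qbg_dt μ x t hμ hx ht).1
    have i2 := (qbg_d2 μ t x hμ ht hx).1
    have i3 := (qbg_d3 μ t x hμ ht hx).1
    have h := ((i1.const_mul 4).sub (i2.const_mul (2*μ-3))).add (i3.const_mul x)
    exact h.congr (ae_of_all _ fun s => by simp only [Pi.add_apply, Pi.sub_apply]; ring)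
  have hcont : ContinuousWithinAt G (Set.Ici 0) 0 := by
    rw [← Set.Ioi_insert, continuousWithinAt_insert_self]
    show Tendsto G (nhdsWithin 0 (Set.Ioi 0)) (nhds (G 0))
    rw [hG0]
    have l1 := (qbg_tend0 (μ-3/2) (x^2/2) (1/t) (by positivity) (by positivity)).const_mul (2*c₀)
    have l2 := (qbg_tend0 (μ-5/2) (x^2/2) (1/t) (by positivity) (by positivity)).const_mul (2*x^2*c₀)
    have l3 := (qbg_tend0 (μ-1/2) (x^2/2) (1/t) (by positivity) (by positivity)).const_mul (4/t*c₀)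
    have l := (l1.sub l2).sub l3
    simp only [mul_zero, sub_zero] at l
    refine l.congr' ?_
    filter_upwards [self_mem_nhdsWithin] with σ hσ
    have hσ : (0:ℝ) < σ := hσ
    rw [hG]
    simp only [if_neg (not_le.2 hσ), qKf]
    rw [show (μ-5/2:ℝ) = (μ-3/2) - 1 by ring, Real.rpow_sub_one hσ.ne',
      show (μ-1/2:ℝ) = (μ-3/2) + 1 by ring, Real.rpow_add_one hσ.ne']
    simp only [hc₀]
    field_simp
  have htop : Tendsto G atTop (nhds 0) := by
    have l1 := (qbg_tendTop (μ-3/2) (x^2/2) (1/t) (by positivity) (by positivity)).const_mul (2*c₀)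
    have l2 := (qbg_tendTop (μ-5/2) (x^2/2) (1/t) (by positivity) (by positivity)).const_mul (2*x^2*c₀)
    have l3 := (qbg_tendTop (μ-1/2) (x^2/2) (1/t) (by positivity) (by positivity)).const_mul (4/t*c₀)
    have l := (l1.sub l2).sub l3
    simp only [mul_zero, sub_zero] at l
    refine l.congr' ?_
    filter_upwards [eventually_gt_atTop 0] with σ hσ
    rw [hG]
    simp only [if_neg (not_le.2 hσ), qKf]
    rw [show (μ-5/2:ℝ) = (μ-3/2) - 1 by ring, Real.rpow_sub_one hσ.ne',
      show (μ-1/2:ℝ) = (μ-3/2) + 1 by ring, Real.rpow_add_one hσ.ne']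
    simp only [hc₀]
    field_simp
  have := integral_Ioi_of_hasDerivAt_of_tendsto hcont hderiv Dint htop
  rw [hG0] at this
  simpa using this

/-- the density of `B(G₁(t))` satisfies the third-order p.d.e.
`4 ∂q/∂t = (2μ − 3) ∂²q/∂x² − x ∂³q/∂x³` for all `x ≠ 0`, `t > 0`. -/
theorem stmt_12 (μ : ℝ) (hμ : 0 < μ) :
    ∀ x t : ℝ, x ≠ 0 → 0 < t →
      4 * deriv (fun τ => qBG μ x τ) t
        = (2 * μ - 3) * deriv (deriv (fun ξ => qBG μ ξ t)) x
          - x * deriv (deriv (deriv (fun ξ => qBG μ ξ t))) x := by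
  intro x t hx ht
  have hfeq : (fun ξ => qBG μ ξ t) = (fun ξ => ∫ s in Set.Ioi (0:ℝ), qKf μ ξ t s) :=
    funext fun ξ => qBG_eq μ ξ t ht
  have hd1 : ∀ y : ℝ, y ≠ 0 → deriv (fun ξ => qBG μ ξ t) y
      = ∫ s in Set.Ioi (0:ℝ), -(y/s) * qKf μ y t s := by
    intro y hy
    rw [hfeq]
    exact ((qbg_d1 μ t y hμ ht hy).2).deriv
  have hd2 : ∀ y : ℝ, y ≠ 0 → deriv (deriv (fun ξ => qBG μ ξ t)) y
      = ∫ s in Set.Ioi (0:ℝ), (y^2/s^2 - 1/s) * qKf μ y t s := by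
    intro y hy
    have hev : deriv (fun ξ => qBG μ ξ t)
        =ᶠ[nhds y] (fun z => ∫ s in Set.Ioi (0:ℝ), -(z/s) * qKf μ z t s) := by
      filter_upwards [eventually_ne_nhds hy] with z hz
      exact hd1 z hz
    rw [Filter.EventuallyEq.deriv_eq hev]
    exact ((qbg_d2 μ t y hμ ht hy).2).deriv
  have hd3 : deriv (deriv (deriv (fun ξ => qBG μ ξ t))) x
      = ∫ s in Set.Ioi (0:ℝ), (3*x/s^2 - x^3/s^3) * qKf μ x t s := by
    have hev : deriv (deriv (fun ξ => qBG μ ξ t))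
        =ᶠ[nhds x] (fun z => ∫ s in Set.Ioi (0:ℝ), (z^2/s^2 - 1/s) * qKf μ z t s) := by
      filter_upwards [eventually_ne_nhds hx] with z hz
      exact hd2 z hz
    rw [Filter.EventuallyEq.deriv_eq hev]
    exact ((qbg_d3 μ t x hμ ht hx).2).deriv
  have hdt : deriv (fun τ => qBG μ x τ) t
      = ∫ s in Set.Ioi (0:ℝ), (s/t^2 - μ/t) * qKf μ x t s := by
    have hev : (fun τ => qBG μ x τ)
        =ᶠ[nhds t] (fun τ => ∫ s in Set.Ioi (0:ℝ), qKf μ x τ s) := by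
      filter_upwards [eventually_gt_nhds ht] with τ hτ
      exact qBG_eq μ x τ hτ
    rw [Filter.EventuallyEq.deriv_eq hev]
    exact ((qbg_dt μ x t hμ hx ht).2).deriv
  rw [hdt, hd2 x hx, hd3]
  have i1 := (qbg_dt μ x t hμ hx ht).1
  have i2 := (qbg_d2 μ t x hμ ht hx).1
  have i3 := (qbg_d3 μ t x hμ ht hx).1
  have key := qbg_key μ x t hμ hx ht
  have expand : (∫ s in Set.Ioi (0:ℝ),
        (4*(s/t^2 - μ/t) - (2*μ-3)*(x^2/s^2 - 1/s) + x*(3*x/s^2 - x^3/s^3)) * qKf μ x t s)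
      = 4 * (∫ s in Set.Ioi (0:ℝ), (s/t^2 - μ/t) * qKf μ x t s)
        - (2*μ-3) * (∫ s in Set.Ioi (0:ℝ), (x^2/s^2 - 1/s) * qKf μ x t s)
        + x * (∫ s in Set.Ioi (0:ℝ), (3*x/s^2 - x^3/s^3) * qKf μ x t s) := by
    rw [show (fun s => (4*(s/t^2 - μ/t) - (2*μ-3)*(x^2/s^2 - 1/s)
          + x*(3*x/s^2 - x^3/s^3)) * qKf μ x t s)
        = (fun s => (4*((s/t^2 - μ/t) * qKf μ x t s)
            - (2*μ-3)*((x^2/s^2 - 1/s) * qKf μ x t s))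
            + x*((3*x/s^2 - x^3/s^3) * qKf μ x t s))
        from funext fun s => by ring]
    have j1 := i1.const_mul 4
    have j2 := i2.const_mul (2*μ-3)
    have j3 := i3.const_mul x
    have jsub : Integrable (fun s => 4*((s/t^2 - μ/t) * qKf μ x t s)
        - (2*μ-3)*((x^2/s^2 - 1/s) * qKf μ x t s)) (volume.restrict (Set.Ioi 0)) :=
      (j1.sub j2).congr (ae_of_all _ fun s => rfl)
    rw [integral_add jsub j3, integral_sub j1 j2,
      integral_const_mul, integral_const_mul, integral_const_mul]
  rw [expand] at key
  linarith
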